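/- arXiv:2111.13705 — 2 statements merged into one kernel-verified Lean document; each statement's English description precedes it below -/
import Mathlib

section
/- Let d ≥ 2, ω = e^{2πi/d}, and let K_i = Σ_{j,k=0}^{d-1} α_{ij} ω^{jk} |k+i⟩⟨k| (indices mod d) for a complex matrix (α_{ij}). Then Σ_{i=0}^{d-1} K_i† K_i = 1_d holds if and only if Σ_{i,j} |α_{ij}|² = 1 and Σ_{i,j} α_{i,j+l} α*_{ij} = 0 for all l = 1, …, d−1 (second index mod d). -/
open Matrix BigOperators

/-- The Kraus operator `K_i = Σ_{j,k} α_{ij} ω^{jk} |k+i⟩⟨k|` (indices mod `d`),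
where `ω = e^{2πi/d}`. -/
noncomputable def krausOp (d : ℕ) [NeZero d] (α : Fin d → Fin d → ℂ) (i : Fin d) :
    Matrix (Fin d) (Fin d) ℂ :=
  Matrix.of fun a b =>
    if a = b + i then
      ∑ j : Fin d,
        α i j * Complex.exp (2 * (Real.pi : ℂ) * Complex.I / d) ^ ((j : ℕ) * (b : ℕ))
    else 0

lemma tp_pow_mod {d : ℕ} {ω : ℂ} (h : ω ^ d = 1) (m : ℕ) : ω ^ (m % d) = ω ^ m := by
  conv_rhs => rw [← Nat.div_add_mod m d]
  rw [pow_add, pow_mul, h, one_pow, one_mul]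

lemma tp_pow_congr {d : ℕ} {ω : ℂ} (h : ω ^ d = 1) {m n : ℕ} (hmn : m % d = n % d) :
    ω ^ m = ω ^ n := by
  rw [← tp_pow_mod h m, ← tp_pow_mod h n, hmn]

lemma tp_pow_val_add {d : ℕ} [NeZero d] {ω : ℂ} (h : ω ^ d = 1) (j l : Fin d) (b : ℕ) :
    ω ^ (((j + l : Fin d) : ℕ) * b) = ω ^ ((j : ℕ) * b) * ω ^ ((l : ℕ) * b) := by
  rw [← pow_add, ← add_mul]
  refine tp_pow_congr h ?_
  rw [Fin.val_add, Nat.mod_mul_mod]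

lemma tp_orth {d : ℕ} [NeZero d] {ω : ℂ} (hω : IsPrimitiveRoot ω d) (l : Fin d) :
    ∑ b : Fin d, ω ^ ((l : ℕ) * (b : ℕ)) = if l = 0 then (d : ℂ) else 0 := by
  have h1 : ∀ b : Fin d, ω ^ ((l : ℕ) * (b : ℕ)) = (ω ^ (l : ℕ)) ^ (b : ℕ) := fun b => by
    rw [← pow_mul]
  simp_rw [h1]
  rw [Fin.sum_univ_eq_sum_range (fun n => (ω ^ (l : ℕ)) ^ n) d]
  by_cases hl : l = 0
  · subst hl; simp
  · rw [if_neg hl]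
    have hlv : (0 : ℕ) < (l : ℕ) := by
      rcases Nat.eq_zero_or_pos (l : ℕ) with h | h
      · exact absurd (Fin.ext (by simp [h])) hl
      · exact h
    have hne : ω ^ (l : ℕ) ≠ 1 := hω.pow_ne_one_of_pos_of_lt hlv.ne' l.isLt
    rw [geom_sum_eq hne, ← pow_mul, mul_comm (l : ℕ) d, pow_mul, hω.pow_eq_one, one_pow,
      sub_self, zero_div]

/-- `Σ_i K_i† K_i = 1` iff `Σ_{i,j} |α_{ij}|² = 1` and
`Σ_{i,j} α_{i,j+l} α*_{ij} = 0` for all `l ≠ 0`. -/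
theorem trace_preserving_iff (d : ℕ) [NeZero d] (hd : 2 ≤ d)
    (α : Fin d → Fin d → ℂ) :
    (∑ i : Fin d, (krausOp d α i)ᴴ * krausOp d α i = 1) ↔
      ((∑ i : Fin d, ∑ j : Fin d, α i j * star (α i j) = 1) ∧
        ∀ l : Fin d, l ≠ 0 →
          ∑ i : Fin d, ∑ j : Fin d, α i (j + l) * star (α i j) = 0) := by
  set ω : ℂ := Complex.exp (2 * (Real.pi : ℂ) * Complex.I / d) with hωdef
  have hω : IsPrimitiveRoot ω d := Complex.isPrimitiveRoot_exp d (NeZero.ne d)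
  have hω1 : ω ^ d = 1 := hω.pow_eq_one
  have hωne : ω ≠ 0 := Complex.exp_ne_zero _
  have hsω : star ω = ω⁻¹ := by
    rw [hωdef, ← Complex.exp_neg]
    show (starRingEnd ℂ) _ = _
    rw [← Complex.exp_conj]
    congr 1
    simp [map_div₀, Complex.conj_I, map_ofNat]
    ring
  have hstar : ∀ m : ℕ, star (ω ^ m) * ω ^ m = 1 := by
    intro m
    rw [star_pow, hsω, inv_pow, inv_mul_cancel₀ (pow_ne_zero _ hωne)]
  set f : Fin d → Fin d → ℂ := fun i b => ∑ j : Fin d, α i j * ω ^ ((j : ℕ) * (b : ℕ)) with hf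
  set T : Fin d → ℂ := fun l => ∑ i : Fin d, ∑ j : Fin d, α i (j + l) * star (α i j) with hT
  -- entrywise description of K_i† K_i
  have entry : ∀ (i b c : Fin d), ((krausOp d α i)ᴴ * krausOp d α i) b c =
      if b = c then star (f i b) * f i b else 0 := by
    intro i b c
    rw [Matrix.mul_apply]
    simp only [conjTranspose_apply, krausOp, Matrix.of_apply]
    by_cases hbc : b = c
    · subst hbc
      rw [if_pos rfl, Finset.sum_eq_single (b + i)]
      · rw [if_pos rfl]
      · intro a _ ha
        rw [if_neg ha, star_zero, zero_mul]
      · intro h; exact absurd (Finset.mem_univ _) h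
    · rw [if_neg hbc]
      refine Finset.sum_eq_zero fun a _ => ?_
      by_cases h1 : a = b + i
      · have h2 : a ≠ c + i := fun h => hbc (add_right_cancel (h1.symm.trans h))
        rw [if_neg h2, mul_zero]
      · rw [if_neg h1, star_zero, zero_mul]
  -- the TP condition in diagonal form
  have step1 : (∑ i : Fin d, (krausOp d α i)ᴴ * krausOp d α i = 1) ↔
      ∀ b : Fin d, ∑ i : Fin d, star (f i b) * f i b = 1 := by
    rw [← Matrix.ext_iff]
    constructor
    · intro h b
      have hb := h b b
      simpa [Matrix.sum_apply, entry, Matrix.one_apply] using hb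
    · intro h b c
      simp only [Matrix.sum_apply, entry, Matrix.one_apply]
      by_cases hbc : b = c
      · subst hbc; simpa using h b
      · simp [hbc]
  -- Fourier expansion of the diagonal
  have expand : ∀ b : Fin d, ∑ i : Fin d, star (f i b) * f i b =
      ∑ l : Fin d, T l * ω ^ ((l : ℕ) * (b : ℕ)) := by
    intro b
    have key : ∀ i : Fin d, star (f i b) * f i b =
        ∑ l : Fin d, (∑ j : Fin d, α i (j + l) * star (α i j)) * ω ^ ((l : ℕ) * (b : ℕ)) := by
      intro i
      calc star (f i b) * f i b
          = ∑ j : Fin d, ∑ j' : Fin d,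
              (star (α i j) * star (ω ^ ((j : ℕ) * (b : ℕ)))) *
                (α i j' * ω ^ ((j' : ℕ) * (b : ℕ))) := by
            rw [hf]
            simp only [star_sum, star_mul']
            rw [Finset.sum_mul_sum]
        _ = ∑ j : Fin d, ∑ l : Fin d,
              (star (α i j) * star (ω ^ ((j : ℕ) * (b : ℕ)))) *
                (α i (j + l) * ω ^ (((j + l : Fin d) : ℕ) * (b : ℕ))) := by
            refine Finset.sum_congr rfl fun j _ => ?_
            exact (Equiv.sum_comp (Equiv.addLeft j)
              (fun j' : Fin d => (star (α i j) * star (ω ^ ((j : ℕ) * (b : ℕ)))) *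
                (α i j' * ω ^ ((j' : ℕ) * (b : ℕ))))).symm
        _ = ∑ j : Fin d, ∑ l : Fin d,
              (α i (j + l) * star (α i j)) * ω ^ ((l : ℕ) * (b : ℕ)) := by
            refine Finset.sum_congr rfl fun j _ => Finset.sum_congr rfl fun l _ => ?_
            rw [tp_pow_val_add hω1]
            have h1 := hstar ((j : ℕ) * (b : ℕ))
            calc (star (α i j) * star (ω ^ ((j : ℕ) * (b : ℕ)))) *
                  (α i (j + l) * (ω ^ ((j : ℕ) * (b : ℕ)) * ω ^ ((l : ℕ) * (b : ℕ))))
                = ((α i (j + l) * star (α i j)) * ω ^ ((l : ℕ) * (b : ℕ))) *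
                    (star (ω ^ ((j : ℕ) * (b : ℕ))) * ω ^ ((j : ℕ) * (b : ℕ))) := by ring
              _ = (α i (j + l) * star (α i j)) * ω ^ ((l : ℕ) * (b : ℕ)) := by
                  rw [h1, mul_one]
        _ = ∑ l : Fin d, ∑ j : Fin d,
              (α i (j + l) * star (α i j)) * ω ^ ((l : ℕ) * (b : ℕ)) := Finset.sum_comm
        _ = ∑ l : Fin d, (∑ j : Fin d, α i (j + l) * star (α i j)) * ω ^ ((l : ℕ) * (b : ℕ)) := by
            refine Finset.sum_congr rfl fun l _ => (Finset.sum_mul _ _ _).symm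
    simp_rw [key]
    rw [Finset.sum_comm]
    refine Finset.sum_congr rfl fun l _ => ?_
    rw [hT, Finset.sum_mul]
  have hdne : (d : ℂ) ≠ 0 := Nat.cast_ne_zero.mpr (NeZero.ne d)
  -- inversion
  have inversion : (∀ b : Fin d, ∑ l : Fin d, T l * ω ^ ((l : ℕ) * (b : ℕ)) = 1) →
      ∀ l₀ : Fin d, T l₀ = if l₀ = 0 then 1 else 0 := by
    intro h l₀
    have hA : ∑ b : Fin d, (∑ l : Fin d, T l * ω ^ ((l : ℕ) * (b : ℕ))) *
        ω ^ (((-l₀ : Fin d) : ℕ) * (b : ℕ)) = if l₀ = 0 then (d : ℂ) else 0 := by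
      have : ∀ b : Fin d, (∑ l : Fin d, T l * ω ^ ((l : ℕ) * (b : ℕ))) *
          ω ^ (((-l₀ : Fin d) : ℕ) * (b : ℕ)) = ω ^ (((-l₀ : Fin d) : ℕ) * (b : ℕ)) := by
        intro b; rw [h b, one_mul]
      simp_rw [this]
      rw [tp_orth hω]
      simp [neg_eq_zero]
    have hB : ∑ b : Fin d, (∑ l : Fin d, T l * ω ^ ((l : ℕ) * (b : ℕ))) *
        ω ^ (((-l₀ : Fin d) : ℕ) * (b : ℕ)) = T l₀ * d := by
      calc ∑ b : Fin d, (∑ l : Fin d, T l * ω ^ ((l : ℕ) * (b : ℕ))) *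
            ω ^ (((-l₀ : Fin d) : ℕ) * (b : ℕ))
          = ∑ l : Fin d, ∑ b : Fin d, T l * ω ^ (((l + -l₀ : Fin d) : ℕ) * (b : ℕ)) := by
            simp_rw [Finset.sum_mul]
            rw [Finset.sum_comm]
            refine Finset.sum_congr rfl fun l _ => Finset.sum_congr rfl fun b _ => ?_
            rw [tp_pow_val_add hω1 l (-l₀), ← mul_assoc]
        _ = ∑ l : Fin d, T l * (if l + -l₀ = 0 then (d : ℂ) else 0) := by
            refine Finset.sum_congr rfl fun l _ => ?_
            rw [← Finset.mul_sum, tp_orth hω]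
        _ = T l₀ * d := by
            rw [Finset.sum_eq_single l₀]
            · simp
            · intro l _ hl
              rw [if_neg (by simpa [add_neg_eq_zero] using hl), mul_zero]
            · intro h; exact absurd (Finset.mem_univ _) h
    rw [hB] at hA
    by_cases h0 : l₀ = 0
    · subst h0
      rw [if_pos rfl] at hA ⊢
      field_simp at hA
      exact hA
    · rw [if_neg h0] at hA ⊢
      exact (mul_eq_zero.mp hA).resolve_right hdne
  rw [step1]
  simp_rw [expand]
  constructor
  · intro h
    have h0 := inversion h 0
    rw [if_pos rfl] at h0
    refine ⟨by simpa [hT] using h0, fun l hl => ?_⟩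
    have hl0 := inversion h l
    rw [if_neg hl] at hl0
    simpa [hT] using hl0
  · rintro ⟨h0, hl⟩ b
    rw [Finset.sum_eq_single 0]
    · have : T 0 = 1 := by simpa [hT] using h0
      simp [this]
    · intro l _ hne
      have : T l = 0 := by simpa [hT] using hl l hne
      simp [this]
    · intro h; exact absurd (Finset.mem_univ _) h
end

section
/- Let d ≥ 2, ω = e^{2πi/d}, and let K_i = Σ_{j,k=0}^{d-1} α_{ij} ω^{jk} |k+i⟩⟨k| (indices mod d). Then Σ_{i=0}^{d-1} K_i K_i† = 1_d holds if and only if Σ_{i,j} |α_{ij}|² = 1 and Σ_{i,j} α_{i,j+l} α*_{ij} ω^{-il} = 0 for all l = 1, …, d−1. -/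
open Matrix BigOperators

set_option linter.unusedSectionVars false

namespace UIaux
variable (d : ℕ) [NeZero d] (α : Fin d → Fin d → ℂ)

noncomputable def w : ℂ := Complex.exp (2 * (Real.pi : ℂ) * Complex.I / d)

lemma hprim : IsPrimitiveRoot (w d) d :=
  Complex.isPrimitiveRoot_exp d (NeZero.ne d)

lemma w_ne_zero : w d ≠ 0 := Complex.exp_ne_zero _

lemma w_zpow_congr {m n : ℤ} (h : m ≡ n [ZMOD d]) : w d ^ m = w d ^ n := by
  obtain ⟨k, hk⟩ := h.dvd
  have hm : m = n + d * (-k) := by linarith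
  set k := -k
  rw [hm, zpow_add₀ (w_ne_zero d), _root_.zpow_mul, zpow_natCast, (hprim d).pow_eq_one,
    _root_.one_zpow, mul_one]

lemma sum_zpow (k : ℤ) :
    ∑ a : Fin d, w d ^ (k * a) = if (d:ℤ) ∣ k then (d:ℂ) else 0 := by
  split_ifs with h
  · have : ∀ a : Fin d, w d ^ (k * (a:ℕ)) = 1 := fun a =>
      ((hprim d).zpow_eq_one_iff_dvd _).2 (Dvd.dvd.mul_right h _)
    simp [this]
  · have hz : w d ^ k ≠ 1 := fun hz => h (((hprim d).zpow_eq_one_iff_dvd k).1 hz)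
    have hzd : (w d ^ k) ^ d = 1 := by
      rw [← zpow_natCast, ← _root_.zpow_mul, mul_comm, _root_.zpow_mul, zpow_natCast,
        (hprim d).pow_eq_one, _root_.one_zpow]
    calc ∑ a : Fin d, w d ^ (k * (a:ℕ)) = ∑ a : Fin d, (w d ^ k) ^ (a:ℕ) := by
          refine Finset.sum_congr rfl fun a _ => ?_
          rw [← zpow_natCast (w d ^ k), ← _root_.zpow_mul]
      _ = ∑ a ∈ Finset.range d, (w d ^ k) ^ a := Fin.sum_univ_eq_sum_range _ _
      _ = ((w d ^ k) ^ d - 1) / (w d ^ k - 1) := geom_sum_eq hz d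
      _ = 0 := by rw [hzd]; simp

lemma star_w : star (w d) = (w d)⁻¹ := by
  rw [show star (w d) = (starRingEnd ℂ) (w d) from rfl, w, ← Complex.exp_conj, ← Complex.exp_neg]
  congr 1
  simp [map_div₀, Complex.conj_I, map_ofNat]
  ring

lemma star_w_pow (n : ℕ) : star (w d ^ n) = w d ^ (-(n:ℤ)) := by
  rw [star_pow, star_w, inv_pow, ← zpow_natCast, ← _root_.zpow_neg]

lemma fin_val_cast_add (x y : Fin d) :
    (((x + y : Fin d) : ℕ) : ZMod d) = ((x:ℕ) : ZMod d) + ((y:ℕ) : ZMod d) := by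
  rw [Fin.val_add, ZMod.natCast_mod, Nat.cast_add]

lemma fin_val_cast_sub (x y : Fin d) :
    (((x - y : Fin d) : ℕ) : ZMod d) = ((x:ℕ) : ZMod d) - ((y:ℕ) : ZMod d) := by
  have := fin_val_cast_add d (x - y) y
  rw [sub_add_cancel] at this
  rw [this]; ring

noncomputable def f (i c : Fin d) : ℂ := ∑ j : Fin d, α i j * w d ^ ((j : ℕ) * (c : ℕ))

noncomputable def S (l : Fin d) : ℂ :=
  ∑ i : Fin d, ∑ j : Fin d, α i (j + l) * star (α i j) *
    w d ^ (-(((i : ℕ) : ℤ) * ((l : ℕ) : ℤ)))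

lemma entry (a b : Fin d) :
    (∑ i : Fin d, krausOp d α i * (krausOp d α i)ᴴ) a b =
      if a = b then ∑ i : Fin d, f d α i (a - i) * star (f d α i (a - i)) else 0 := by
  rw [Matrix.sum_apply]
  have h1 : ∀ i : Fin d, (krausOp d α i * (krausOp d α i)ᴴ) a b =
      if a = b then f d α i (a - i) * star (f d α i (a - i)) else 0 := by
    intro i
    rw [Matrix.mul_apply]
    have hK : ∀ x c : Fin d, krausOp d α i x c = if x = c + i then f d α i c else 0 :=
      fun _ _ => rfl
    have hterm : ∀ c : Fin d,
        krausOp d α i a c * (krausOp d α i)ᴴ c b =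
          if a - i = c then (if a = b then f d α i c * star (f d α i c) else 0) else 0 := by
      intro c
      rw [Matrix.conjTranspose_apply, hK, hK]
      rcases eq_or_ne a (c + i) with h1 | h1
      · have hc : a - i = c := by rw [h1]; exact add_sub_cancel_right c i
        rcases eq_or_ne b (c + i) with h2 | h2
        · have hab : a = b := h1.trans h2.symm
          rw [if_pos h1, if_pos h2, if_pos hc, if_pos hab]
        · have hab : a ≠ b := fun h => h2 (h ▸ h1)
          rw [if_pos h1, if_neg h2, star_zero, mul_zero, if_pos hc, if_neg hab]
      · have hc : a - i ≠ c := fun h => h1 (by rw [← h, sub_add_cancel])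
        rw [if_neg h1, zero_mul, if_neg hc]
    rw [Finset.sum_congr rfl fun c _ => hterm c, Finset.sum_ite_eq]
    simp
  rw [Finset.sum_congr rfl fun i _ => h1 i]
  by_cases h : a = b <;> simp [h]

lemma hstarf (i c : Fin d) : star (f d α i c) =
    ∑ j : Fin d, star (α i j) * w d ^ (-(((j : ℕ) * (c : ℕ) : ℕ) : ℤ)) := by
  rw [f, star_sum]
  exact Finset.sum_congr rfl fun j _ => by rw [star_mul', star_w_pow]

lemma diag_eq (a : Fin d) :
    ∑ i : Fin d, f d α i (a - i) * star (f d α i (a - i)) =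
      ∑ l : Fin d, w d ^ (((l : ℕ) : ℤ) * ((a : ℕ) : ℤ)) * S d α l := by
  have key : ∀ i j' l : Fin d,
      α i (j' + l) * w d ^ ((((j' + l : Fin d) : ℕ) * (((a - i : Fin d)) : ℕ))) *
        (star (α i j') * w d ^ (-(((j' : ℕ) * (((a - i : Fin d)) : ℕ) : ℕ) : ℤ))) =
      w d ^ (((l : ℕ) : ℤ) * ((a : ℕ) : ℤ)) *
        (α i (j' + l) * star (α i j') * w d ^ (-(((i : ℕ) : ℤ) * ((l : ℕ) : ℤ)))) := by
    intro i j' l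
    have hw : w d ^ (((((j' + l : Fin d) : ℕ) * (((a - i : Fin d)) : ℕ) : ℕ)) : ℤ) *
        w d ^ (-(((j' : ℕ) * (((a - i : Fin d)) : ℕ) : ℕ) : ℤ)) =
        w d ^ (((l : ℕ) : ℤ) * ((a : ℕ) : ℤ)) *
          w d ^ (-(((i : ℕ) : ℤ) * ((l : ℕ) : ℤ))) := by
      rw [← zpow_add₀ (w_ne_zero d), ← zpow_add₀ (w_ne_zero d)]
      apply w_zpow_congr
      rw [← ZMod.intCast_eq_intCast_iff]
      have h1 := fin_val_cast_sub d a i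
      have h2 := fin_val_cast_add d j' l
      push_cast
      rw [h1, h2]
      ring
    calc α i (j' + l) * w d ^ ((((j' + l : Fin d) : ℕ) * (((a - i : Fin d)) : ℕ))) *
          (star (α i j') * w d ^ (-(((j' : ℕ) * (((a - i : Fin d)) : ℕ) : ℕ) : ℤ)))
        = α i (j' + l) * star (α i j') *
            (w d ^ (((((j' + l : Fin d) : ℕ) * (((a - i : Fin d)) : ℕ) : ℕ)) : ℤ) *
              w d ^ (-(((j' : ℕ) * (((a - i : Fin d)) : ℕ) : ℕ) : ℤ))) := by
          rw [zpow_natCast]; ring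
      _ = _ := by rw [hw]; ring
  calc ∑ i : Fin d, f d α i (a - i) * star (f d α i (a - i))
      = ∑ i : Fin d, ∑ j' : Fin d, ∑ l : Fin d,
          α i (j' + l) * w d ^ ((((j' + l : Fin d) : ℕ) * (((a - i : Fin d)) : ℕ))) *
            (star (α i j') * w d ^ (-(((j' : ℕ) * (((a - i : Fin d)) : ℕ) : ℕ) : ℤ))) := by
        refine Finset.sum_congr rfl fun i _ => ?_
        rw [hstarf, f, Finset.sum_mul_sum, Finset.sum_comm]
        refine Finset.sum_congr rfl fun j' _ => ?_
        exact (Fintype.sum_equiv (Equiv.addLeft j') _ _ (fun l => rfl)).symm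
    _ = ∑ i : Fin d, ∑ j' : Fin d, ∑ l : Fin d,
          w d ^ (((l : ℕ) : ℤ) * ((a : ℕ) : ℤ)) *
            (α i (j' + l) * star (α i j') * w d ^ (-(((i : ℕ) : ℤ) * ((l : ℕ) : ℤ)))) :=
        Finset.sum_congr rfl fun i _ => Finset.sum_congr rfl fun j' _ =>
          Finset.sum_congr rfl fun l _ => key i j' l
    _ = ∑ l : Fin d, w d ^ (((l : ℕ) : ℤ) * ((a : ℕ) : ℤ)) * S d α l := by
        rw [show (∑ i : Fin d, ∑ j' : Fin d, ∑ l : Fin d,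
            w d ^ (((l : ℕ) : ℤ) * ((a : ℕ) : ℤ)) *
              (α i (j' + l) * star (α i j') * w d ^ (-(((i : ℕ) : ℤ) * ((l : ℕ) : ℤ))))) =
          ∑ l : Fin d, ∑ i : Fin d, ∑ j' : Fin d,
            w d ^ (((l : ℕ) : ℤ) * ((a : ℕ) : ℤ)) *
              (α i (j' + l) * star (α i j') * w d ^ (-(((i : ℕ) : ℤ) * ((l : ℕ) : ℤ))))
          from (Finset.sum_congr rfl fun i _ => Finset.sum_comm).trans Finset.sum_comm]
        refine Finset.sum_congr rfl fun l _ => ?_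
        rw [S, Finset.mul_sum]
        exact Finset.sum_congr rfl fun i _ => by rw [Finset.mul_sum]

end UIaux

open UIaux in
/-- `Σ_i K_i K_i† = 1` iff `Σ_{i,j} |α_{ij}|² = 1` and
`Σ_{i,j} α_{i,j+l} α*_{ij} ω^{-il} = 0` for all `l ≠ 0`. -/
theorem unital_iff (d : ℕ) [NeZero d] (hd : 2 ≤ d) (α : Fin d → Fin d → ℂ) :
    (∑ i : Fin d, krausOp d α i * (krausOp d α i)ᴴ = 1) ↔
      ((∑ i : Fin d, ∑ j : Fin d, α i j * star (α i j) = 1) ∧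
        ∀ l : Fin d, l ≠ 0 →
          ∑ i : Fin d, ∑ j : Fin d, α i (j + l) * star (α i j) *
            Complex.exp (2 * (Real.pi : ℂ) * Complex.I / d) ^
              (-(((i : ℕ) : ℤ) * ((l : ℕ) : ℤ))) = 0) := by
  have hS : ∀ l : Fin d, (∑ i : Fin d, ∑ j : Fin d, α i (j + l) * star (α i j) *
      Complex.exp (2 * (Real.pi : ℂ) * Complex.I / d) ^
        (-(((i : ℕ) : ℤ) * ((l : ℕ) : ℤ)))) = S d α l := fun l => rfl
  have hS0 : S d α 0 = ∑ i : Fin d, ∑ j : Fin d, α i j * star (α i j) := by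
    rw [S]
    refine Finset.sum_congr rfl fun i _ => Finset.sum_congr rfl fun j _ => ?_
    simp
  have hdC : (d : ℂ) ≠ 0 := Nat.cast_ne_zero.mpr (NeZero.ne d)
  have hM : (∑ i : Fin d, krausOp d α i * (krausOp d α i)ᴴ = 1) ↔
      ∀ a : Fin d, ∑ l : Fin d, w d ^ (((l:ℕ):ℤ) * ((a:ℕ):ℤ)) * S d α l = 1 := by
    constructor
    · intro h a
      have h2 := congrFun (congrFun h a) a
      rw [entry d α a a, Matrix.one_apply_eq, if_pos rfl, diag_eq] at h2
      exact h2
    · intro h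
      apply Matrix.ext
      intro a b
      rw [entry d α a b, Matrix.one_apply]
      by_cases hab : a = b
      · rw [if_pos hab, if_pos hab, diag_eq]
        exact h a
      · rw [if_neg hab, if_neg hab]
  rw [hM]
  constructor
  · intro h
    have hSm : ∀ m : Fin d, S d α m = if m = 0 then 1 else 0 := by
      intro m
      have hstep : ∀ a : Fin d, w d ^ (-(((m:ℕ):ℤ) * ((a:ℕ):ℤ))) *
          (∑ l : Fin d, w d ^ (((l:ℕ):ℤ) * ((a:ℕ):ℤ)) * S d α l)
          = ∑ l : Fin d, w d ^ ((((l:ℕ):ℤ) - ((m:ℕ):ℤ)) * ((a:ℕ):ℤ)) * S d α l := by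
        intro a
        rw [Finset.mul_sum]
        refine Finset.sum_congr rfl fun l _ => ?_
        rw [← mul_assoc, ← zpow_add₀ (w_ne_zero d)]
        congr 2
        ring
      have hmain : ∑ a : Fin d, w d ^ (-(((m:ℕ):ℤ)) * ((a:ℕ):ℤ))
          = ∑ l : Fin d, (if (d:ℤ) ∣ (((l:ℕ):ℤ) - ((m:ℕ):ℤ)) then (d:ℂ) else 0) * S d α l := by
        calc ∑ a : Fin d, w d ^ (-(((m:ℕ):ℤ)) * ((a:ℕ):ℤ))
            = ∑ a : Fin d, w d ^ (-(((m:ℕ):ℤ) * ((a:ℕ):ℤ))) *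
                (∑ l : Fin d, w d ^ (((l:ℕ):ℤ) * ((a:ℕ):ℤ)) * S d α l) := by
              refine Finset.sum_congr rfl fun a _ => ?_
              rw [h a, mul_one]
              congr 1
              ring
          _ = ∑ a : Fin d, ∑ l : Fin d,
                w d ^ ((((l:ℕ):ℤ) - ((m:ℕ):ℤ)) * ((a:ℕ):ℤ)) * S d α l :=
              Finset.sum_congr rfl fun a _ => hstep a
          _ = ∑ l : Fin d, ∑ a : Fin d,
                w d ^ ((((l:ℕ):ℤ) - ((m:ℕ):ℤ)) * ((a:ℕ):ℤ)) * S d α l := Finset.sum_comm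
          _ = ∑ l : Fin d, (if (d:ℤ) ∣ (((l:ℕ):ℤ) - ((m:ℕ):ℤ)) then (d:ℂ) else 0) * S d α l := by
              refine Finset.sum_congr rfl fun l _ => ?_
              rw [← Finset.sum_mul, sum_zpow]
      -- RHS of hmain collapses to d * S m
      have hcollapse : ∑ l : Fin d, (if (d:ℤ) ∣ (((l:ℕ):ℤ) - ((m:ℕ):ℤ)) then (d:ℂ) else 0) * S d α l
          = (d:ℂ) * S d α m := by
        rw [Finset.sum_eq_single m]
        · rw [if_pos (by simp)]
        · intro l _ hlm
          rw [if_neg, zero_mul]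
          intro hdvd
          have hz : ((l:ℕ):ℤ) - ((m:ℕ):ℤ) = 0 := by
            refine Int.eq_zero_of_abs_lt_dvd hdvd ?_
            have h1 : (l:ℕ) < d := l.isLt
            have h2 : (m:ℕ) < d := m.isLt
            rw [abs_lt]
            omega
          exact hlm (Fin.val_injective (by omega))
        · intro hm
          exact absurd (Finset.mem_univ m) hm
      -- LHS of hmain
      have hlhs : ∑ a : Fin d, w d ^ (-(((m:ℕ):ℤ)) * ((a:ℕ):ℤ))
          = if m = 0 then (d:ℂ) else 0 := by
        rw [sum_zpow]
        by_cases hm : m = 0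
        · rw [if_pos hm, if_pos (by simp [hm])]
        · rw [if_neg, if_neg hm]
          rw [dvd_neg, Int.natCast_dvd_natCast]
          intro hdm
          have hpos : 0 < (m:ℕ) := Nat.pos_of_ne_zero fun h0 => hm (Fin.val_injective h0)
          exact absurd (Nat.le_of_dvd hpos hdm) (by have := m.isLt; omega)
      have hfin : (d:ℂ) * S d α m = if m = 0 then (d:ℂ) else 0 := by
        rw [← hcollapse, ← hmain, hlhs]
      by_cases hm : m = 0
      · rw [if_pos hm] at hfin ⊢
        field_simp at hfin
        exact hfin
      · rw [if_neg hm] at hfin ⊢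
        exact (mul_eq_zero.mp hfin).resolve_left hdC
    refine ⟨by rw [← hS0]; have := hSm 0; rw [if_pos rfl] at this; exact this, ?_⟩
    intro l hl
    rw [hS l]
    have := hSm l
    rwa [if_neg hl] at this
  · rintro ⟨h1, h2⟩ a
    rw [Finset.sum_eq_single 0]
    · rw [hS0, h1]
      simp
    · intro l _ hl
      have : S d α l = 0 := by rw [← hS l]; exact h2 l hl
      rw [this, mul_zero]
    · intro h0
      exact absurd (Finset.mem_univ 0) h0
end
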